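/- Let L be the Laplacian matrix of a continuous-time Markov chain on a finite state space V whose underlying directed graph G is strongly connected (all transition rates on edges are strictly positive). Then there exists a unique vector μ ∈ ℝ^V with L μ = 0 and ∑_{v∈V} μ_v = 1, and moreover μ_v > 0 for every v ∈ V. -/

import Mathlib

/-- The Laplacian of transition rates `ℓ`, where `ℓ u v` is the rate of the
transition from `u` to `v` : the entry in row `v`, column `u` is `ℓ u v` for
`v ≠ u`, and the diagonal entry in column `u` is `-∑_{w ≠ u} ℓ u w`.
Columns sum to zero. -/
noncomputable def CTMCLaplacian {V : Type*} [Fintype V] [DecidableEq V] (ℓ : V → V → ℝ) :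
    Matrix V V ℝ :=
  fun v u => if v = u then -∑ w ∈ Finset.univ.filter (· ≠ u), ℓ u w else ℓ u v

open Finset

section Aux

variable {V : Type*} [Fintype V] [DecidableEq V]

lemma lap_mulVec (ℓ : V → V → ℝ) (x : V → ℝ) (v : V) :
    (CTMCLaplacian ℓ).mulVec x v =
      (∑ u ∈ univ.filter (· ≠ v), ℓ u v * x u)
        - (∑ w ∈ univ.filter (· ≠ v), ℓ v w) * x v := by
  simp only [Matrix.mulVec, dotProduct, CTMCLaplacian]
  rw [← Finset.add_sum_erase _ _ (mem_univ v), if_pos rfl]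
  have h2 : ∑ u ∈ univ.erase v,
      (if v = u then -∑ w ∈ (univ.filter (· ≠ u)), ℓ u w else ℓ u v) * x u
      = ∑ u ∈ univ.erase v, ℓ u v * x u := by
    refine Finset.sum_congr rfl fun u hu => ?_
    rw [if_neg fun h => Finset.ne_of_mem_erase hu h.symm]
  rw [h2]
  simp only [Finset.filter_ne']
  ring

lemma lap_colsum (ℓ : V → V → ℝ) (u : V) :
    ∑ v : V, CTMCLaplacian ℓ v u = 0 := by
  simp only [CTMCLaplacian]
  rw [← Finset.add_sum_erase _ _ (mem_univ u), if_pos rfl]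
  have h2 : (∑ v ∈ univ.erase u,
      if v = u then -∑ w ∈ (univ.filter (· ≠ u)), ℓ u w else ℓ u v)
      = ∑ v ∈ univ.erase u, ℓ u v := by
    refine Finset.sum_congr rfl fun v hv => ?_
    rw [if_neg (Finset.ne_of_mem_erase hv)]
  rw [h2, Finset.filter_ne']
  ring

lemma lap_sum_mulVec (ℓ : V → V → ℝ) (x : V → ℝ) :
    ∑ v : V, (CTMCLaplacian ℓ).mulVec x v = 0 := by
  unfold Matrix.mulVec dotProduct
  rw [Finset.sum_comm]
  refine Finset.sum_eq_zero fun u _ => ?_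
  rw [← Finset.sum_mul, lap_colsum, zero_mul]

lemma zero_propagates (ℓ : V → V → ℝ) (hnn : ∀ u v : V, 0 ≤ ℓ u v) (μ : V → ℝ)
    (hker : (CTMCLaplacian ℓ).mulVec μ = 0) (hμ : ∀ v, 0 ≤ μ v)
    {u v : V} (h : Relation.ReflTransGen (fun a b => 0 < ℓ a b) u v) :
    μ v = 0 → μ u = 0 := by
  induction h with
  | refl => exact id
  | @tail b c _ hedge ih =>
    intro hc
    apply ih
    by_cases hbc : b = c
    · rw [hbc]; exact hc
    · have h0 : (∑ x ∈ univ.filter (· ≠ c), ℓ x c * μ x)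
          - (∑ w ∈ univ.filter (· ≠ c), ℓ c w) * μ c = 0 := by
        rw [← lap_mulVec, hker]; rfl
      rw [hc, mul_zero, sub_zero] at h0
      have hterm := (Finset.sum_eq_zero_iff_of_nonneg
        (fun x _ => mul_nonneg (hnn x c) (hμ x))).mp h0 b
        (by simp [hbc])
      rcases mul_eq_zero.mp hterm with h' | h'
      · exact absurd h' hedge.ne'
      · exact h'

lemma posPart_ker (ℓ : V → V → ℝ) (hnn : ∀ u v : V, 0 ≤ ℓ u v) (μ : V → ℝ)
    (hker : (CTMCLaplacian ℓ).mulVec μ = 0) :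
    (CTMCLaplacian ℓ).mulVec (fun v => max (μ v) 0) = 0 := by
  have hnonneg : ∀ v, 0 ≤ (CTMCLaplacian ℓ).mulVec (fun v => max (μ v) 0) v := by
    intro v
    rw [lap_mulVec]
    rcases le_or_gt 0 (μ v) with h | h
    · have h0 : (∑ u ∈ univ.filter (· ≠ v), ℓ u v * μ u)
          - (∑ w ∈ univ.filter (· ≠ v), ℓ v w) * μ v = 0 := by
        rw [← lap_mulVec, hker]; rfl
      have hle : (∑ u ∈ univ.filter (· ≠ v), ℓ u v * μ u)
          ≤ ∑ u ∈ univ.filter (· ≠ v), ℓ u v * max (μ u) 0 :=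
        Finset.sum_le_sum fun u _ =>
          mul_le_mul_of_nonneg_left (le_max_left _ _) (hnn u v)
      rw [max_eq_left h]
      linarith
    · rw [max_eq_right h.le, mul_zero, sub_zero]
      exact Finset.sum_nonneg fun u _ => mul_nonneg (hnn u v) (le_max_right _ _)
  have hsum := lap_sum_mulVec ℓ (fun v => max (μ v) 0)
  funext v
  exact (Finset.sum_eq_zero_iff_of_nonneg (fun v _ => hnonneg v)).mp hsum v (mem_univ v)

lemma pos_everywhere (ℓ : V → V → ℝ) (hnn : ∀ u v : V, 0 ≤ ℓ u v)
    (hconn : ∀ u v : V, Relation.ReflTransGen (fun a b => 0 < ℓ a b) u v)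
    (μ : V → ℝ) (hker : (CTMCLaplacian ℓ).mulVec μ = 0) (hμ : ∀ v, 0 ≤ μ v)
    {u : V} (hu : 0 < μ u) (v : V) : 0 < μ v := by
  rcases (hμ v).lt_or_eq with h | h
  · exact h
  · exact absurd (zero_propagates ℓ hnn μ hker hμ (hconn u v) h.symm) hu.ne'

end Aux

/-- An irreducible CTMC on a finite state space (nonnegative rates, no
self-loops, strongly connected through positive-rate transitions) has a unique
stationary distribution, and it is strictly positive. -/
theorem stmt2 {V : Type*} [Fintype V] [DecidableEq V] [Nonempty V] (ℓ : V → V → ℝ)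
    (hnn : ∀ u v : V, 0 ≤ ℓ u v) (hself : ∀ u : V, ℓ u u = 0)
    (hconn : ∀ u v : V, Relation.ReflTransGen (fun a b => 0 < ℓ a b) u v) :
    (∃! μ : V → ℝ, (CTMCLaplacian ℓ).mulVec μ = 0 ∧ ∑ v : V, μ v = 1) ∧
    (∀ μ : V → ℝ, (CTMCLaplacian ℓ).mulVec μ = 0 ∧ ∑ v : V, μ v = 1 → ∀ v : V, 0 < μ v) := by
  -- positivity
  have hposlem : ∀ μ : V → ℝ,
      (CTMCLaplacian ℓ).mulVec μ = 0 ∧ ∑ v : V, μ v = 1 → ∀ v : V, 0 < μ v := by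
    rintro μ ⟨hker, hsum⟩ v
    have hker' := posPart_ker ℓ hnn μ hker
    have hex : ∃ u, 0 < μ u := by
      by_contra h
      push_neg at h
      have : ∑ v : V, μ v ≤ 0 := Finset.sum_nonpos fun v _ => h v
      linarith
    obtain ⟨u, hu⟩ := hex
    have hup : 0 < max (μ u) 0 := lt_max_of_lt_left hu
    have hmv := pos_everywhere ℓ hnn hconn _ hker' (fun v => le_max_right _ _) hup v
    exact (lt_max_iff.mp hmv).resolve_right (lt_irrefl 0)
  -- a kernel vector with zero sum is everywhere nonpositive
  have hnonpos : ∀ δ : V → ℝ, (CTMCLaplacian ℓ).mulVec δ = 0 → ∑ v : V, δ v = 0 →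
      ∀ v : V, δ v ≤ 0 := by
    intro δ hker hsum v
    by_contra h
    push_neg at h
    have hker' := posPart_ker ℓ hnn δ hker
    have hup : 0 < max (δ v) 0 := lt_max_of_lt_left h
    have hall : ∀ w, 0 < δ w := fun w =>
      (lt_max_iff.mp (pos_everywhere ℓ hnn hconn _ hker'
        (fun _ => le_max_right _ _) hup w)).resolve_right (lt_irrefl 0)
    have : (0:ℝ) < ∑ v : V, δ v :=
      Finset.sum_pos (fun w _ => hall w) Finset.univ_nonempty
    linarith
  -- uniqueness
  have huniq : ∀ μ ν : V → ℝ,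
      ((CTMCLaplacian ℓ).mulVec μ = 0 ∧ ∑ v : V, μ v = 1) →
      ((CTMCLaplacian ℓ).mulVec ν = 0 ∧ ∑ v : V, ν v = 1) → μ = ν := by
    rintro μ ν ⟨hk1, hs1⟩ ⟨hk2, hs2⟩
    have hkd : (CTMCLaplacian ℓ).mulVec (μ - ν) = 0 := by
      rw [Matrix.mulVec_sub, hk1, hk2, sub_zero]
    have hkd' : (CTMCLaplacian ℓ).mulVec (ν - μ) = 0 := by
      rw [Matrix.mulVec_sub, hk1, hk2, sub_zero]
    have hsd : ∑ v : V, (μ - ν) v = 0 := by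
      simp only [Pi.sub_apply, Finset.sum_sub_distrib, hs1, hs2, sub_self]
    have hsd' : ∑ v : V, (ν - μ) v = 0 := by
      simp only [Pi.sub_apply, Finset.sum_sub_distrib, hs1, hs2, sub_self]
    funext v
    have h1 := hnonpos _ hkd hsd v
    have h2 := hnonpos _ hkd' hsd' v
    simp only [Pi.sub_apply] at h1 h2
    linarith
  -- existence
  have hdet : (CTMCLaplacian ℓ).det = 0 := by
    rw [← Matrix.det_transpose]
    rw [← Matrix.exists_mulVec_eq_zero_iff]
    refine ⟨fun _ => 1, ?_, ?_⟩
    · intro h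
      have := congrFun h (Classical.arbitrary V)
      simp at this
    · funext u
      simp only [Matrix.mulVec, dotProduct, Matrix.transpose_apply, mul_one]
      exact lap_colsum ℓ u
  obtain ⟨ξ, hξ0, hξker⟩ := (Matrix.exists_mulVec_eq_zero_iff).mpr hdet
  have hex : ∃ η : V → ℝ, (CTMCLaplacian ℓ).mulVec η = 0 ∧ ∃ v, 0 < η v := by
    obtain ⟨v, hv⟩ := Function.ne_iff.mp hξ0
    rcases lt_or_gt_of_ne hv with h | h
    · refine ⟨-ξ, ?_, v, by simpa using h⟩
      rw [Matrix.mulVec_neg, hξker, neg_zero]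
    · exact ⟨ξ, hξker, v, h⟩
  obtain ⟨η, hηker, v, hηv⟩ := hex
  have hker' := posPart_ker ℓ hnn η hηker
  have hup : 0 < max (η v) 0 := lt_max_of_lt_left hηv
  have hall : ∀ w, 0 < max (η w) 0 :=
    pos_everywhere ℓ hnn hconn _ hker' (fun _ => le_max_right _ _) hup
  set s : ℝ := ∑ w : V, max (η w) 0 with hs
  have hspos : 0 < s :=
    Finset.sum_pos (fun w _ => hall w) Finset.univ_nonempty
  refine ⟨⟨fun w => s⁻¹ * max (η w) 0, ⟨?_, ?_⟩, fun ν hν => huniq ν _ hν ⟨?_, ?_⟩⟩, hposlem⟩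
  · have : (fun w => s⁻¹ * max (η w) 0) = s⁻¹ • (fun w => max (η w) 0) := rfl
    rw [this, Matrix.mulVec_smul, hker', smul_zero]
  · rw [← Finset.mul_sum, ← hs, inv_mul_cancel₀ hspos.ne']
  · have : (fun w => s⁻¹ * max (η w) 0) = s⁻¹ • (fun w => max (η w) 0) := rfl
    rw [this, Matrix.mulVec_smul, hker', smul_zero]
  · rw [← Finset.mul_sum, ← hs, inv_mul_cancel₀ hspos.ne']
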